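/- Fix α ∈ [0, 2]. For x ∈ ℝ let n_x denote the integer closest to x (the smaller one when x is a half-integer). Define S(x) = 1/(x² + 1) + Σ_{n ∈ ℤ, n ≠ 0} |n|^{−α} / ((x − n)² + |n|^{−2α}) and μ(x) = 1/(x² + 1) if −1/2 < x ≤ 1/2, and μ(x) = |n_x|^{−α} / ((x − n_x)² + |n_x|^{−2α}) otherwise. Then the series defining S converges for every x and there exist constants 0 < c ≤ C with c·μ(x) ≤ S(x) ≤ C·μ(x) for all x ∈ ℝ. -/

import Mathlib

private lemma one_le_abs_cast {n : ℤ} (hn : n ≠ 0) : (1:ℝ) ≤ |(n:ℝ)| := by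
  rw [← Int.cast_abs]
  exact_mod_cast Int.one_le_abs hn

private lemma sq_quarter {x : ℝ} {m n : ℤ} (hnm : n ≠ m) (hx : |x - (m:ℝ)| ≤ 1/2) :
    ((m:ℝ) - (n:ℝ))^2 / 4 ≤ (x - (n:ℝ))^2 := by
  have hb : (1:ℝ) ≤ |(m:ℝ) - (n:ℝ)| := by
    have h1 : ((m - n : ℤ):ℝ) = (m:ℝ) - (n:ℝ) := by push_cast; ring
    rw [← h1, ← Int.cast_abs]
    exact_mod_cast Int.one_le_abs (sub_ne_zero.2 fun h => hnm h.symm)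
  have ha := abs_le.1 hx
  rcases le_or_gt 0 ((m:ℝ) - (n:ℝ)) with hb0 | hb0
  · rw [abs_of_nonneg hb0] at hb
    nlinarith [mul_nonneg (by linarith : (0:ℝ) ≤ 2*(x - (m:ℝ)) + ((m:ℝ) - (n:ℝ)))
      (by linarith : (0:ℝ) ≤ 2*(x - (m:ℝ)) + 3*((m:ℝ) - (n:ℝ)))]
  · rw [abs_of_neg hb0] at hb
    nlinarith [mul_nonneg (by linarith : (0:ℝ) ≤ -(2*(x - (m:ℝ)) + ((m:ℝ) - (n:ℝ))))
      (by linarith : (0:ℝ) ≤ -(2*(x - (m:ℝ)) + 3*((m:ℝ) - (n:ℝ))))]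

private lemma rpow_two_eq (M : ℝ) : M ^ (2:ℝ) = M^2 := by
  rw [show (2:ℝ) = ((2:ℕ):ℝ) by norm_num, Real.rpow_natCast]

set_option maxHeartbeats 1000000 in
private lemma term_bound {α x : ℝ} (hα0 : 0 ≤ α) (hα2 : α ≤ 2) {m : ℤ}
    (hx : |x - (m:ℝ)| ≤ 1/2) {n : ℤ} (hn : n ≠ 0) (hnm : n ≠ m) :
    |(n:ℝ)| ^ (-α) / ((x - (n:ℝ))^2 + |(n:ℝ)| ^ (-(2*α))) ≤
      16 * (if m = 0 then 1 else |(m:ℝ)| ^ (-α)) * (1/((m:ℝ)-(n:ℝ))^2 + 1/(n:ℝ)^2) := by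
  have hN : (1:ℝ) ≤ |(n:ℝ)| := one_le_abs_cast hn
  have hNpos : (0:ℝ) < |(n:ℝ)| := by linarith
  have hA1 : |(n:ℝ)| ^ (-α) ≤ 1 := Real.rpow_le_one_of_one_le_of_nonpos hN (by linarith)
  have hAnn : (0:ℝ) ≤ |(n:ℝ)| ^ (-α) := (Real.rpow_pos_of_pos hNpos _).le
  have hn2 : (1:ℝ) ≤ (n:ℝ)^2 := by nlinarith [sq_abs (n:ℝ)]
  have hn2pos : (0:ℝ) < (n:ℝ)^2 := by linarith
  have hb : (1:ℝ) ≤ |(m:ℝ) - (n:ℝ)| := by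
    have h1 : ((m - n : ℤ):ℝ) = (m:ℝ) - (n:ℝ) := by push_cast; ring
    rw [← h1, ← Int.cast_abs]
    exact_mod_cast Int.one_le_abs (sub_ne_zero.2 fun h => hnm h.symm)
  have hB1 : (1:ℝ) ≤ ((m:ℝ) - (n:ℝ))^2 := by nlinarith [sq_abs ((m:ℝ) - (n:ℝ))]
  have hBpos : (0:ℝ) < ((m:ℝ) - (n:ℝ))^2 := by linarith
  have hq := sq_quarter hnm hx
  have hrp : (0:ℝ) < |(n:ℝ)| ^ (-(2*α)) := Real.rpow_pos_of_pos hNpos _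
  have step1 : |(n:ℝ)| ^ (-α) / ((x - (n:ℝ))^2 + |(n:ℝ)| ^ (-(2*α))) ≤
      4 * |(n:ℝ)| ^ (-α) / ((m:ℝ) - (n:ℝ))^2 := by
    rw [div_le_div_iff₀ (by positivity) hBpos]
    nlinarith [mul_le_mul_of_nonneg_left hq hAnn, sq_nonneg (x - (n:ℝ))]
  rcases eq_or_ne m 0 with hm | hm
  · subst hm
    rw [if_pos rfl]
    have e : (((0:ℤ):ℝ) - (n:ℝ))^2 = (n:ℝ)^2 := by push_cast; ring
    rw [e] at step1 ⊢
    refine step1.trans ?_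
    rw [div_le_iff₀ hn2pos]
    have hinv : 16 * 1 * (1/(n:ℝ)^2 + 1/(n:ℝ)^2) * (n:ℝ)^2 = 32 := by
      field_simp
      norm_num
    rw [hinv]
    nlinarith
  · rw [if_neg hm]
    obtain ⟨M, hMdef⟩ : ∃ M', M' = |(m:ℝ)| := ⟨_, rfl⟩
    rw [← hMdef]
    have hM : (1:ℝ) ≤ M := hMdef ▸ one_le_abs_cast hm
    have hMpos : (0:ℝ) < M := by linarith
    have hMann : (0:ℝ) ≤ M ^ (-α) := (Real.rpow_pos_of_pos hMpos _).le
    rcases le_or_gt M (2 * |(n:ℝ)|) with h2 | h2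
    · -- |n| ≥ M/2 : |n|^(-α) ≤ 4 M^(-α)
      have hA4 : |(n:ℝ)| ^ (-α) ≤ 4 * M ^ (-α) := by
        have h1 : (M/2) ^ α ≤ |(n:ℝ)| ^ α :=
          Real.rpow_le_rpow (by positivity) (by linarith) hα0
        have h2' : |(n:ℝ)| ^ (-α) ≤ (M/2) ^ (-α) := by
          rw [Real.rpow_neg hNpos.le, Real.rpow_neg (by positivity : (0:ℝ) ≤ M/2)]
          exact inv_anti₀ (Real.rpow_pos_of_pos (by positivity) _) h1
        have h3 : (M/2) ^ (-α) = M ^ (-α) * 2 ^ α := by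
          rw [Real.div_rpow hMpos.le (by norm_num : (0:ℝ) ≤ 2), Real.rpow_neg (by norm_num : (0:ℝ) ≤ 2)]
          field_simp
        have h4 : (2:ℝ) ^ α ≤ 4 := by
          calc (2:ℝ) ^ α ≤ (2:ℝ) ^ (2:ℝ) :=
                Real.rpow_le_rpow_of_exponent_le (by norm_num) hα2
            _ = 4 := by rw [rpow_two_eq]; norm_num
        calc |(n:ℝ)| ^ (-α) ≤ M ^ (-α) * 2 ^ α := h3 ▸ h2'
          _ ≤ 4 * M ^ (-α) := by nlinarith
      calc |(n:ℝ)| ^ (-α) / ((x - (n:ℝ))^2 + |(n:ℝ)| ^ (-(2*α)))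
          ≤ 4 * |(n:ℝ)| ^ (-α) / ((m:ℝ) - (n:ℝ))^2 := step1
        _ ≤ 16 * M ^ (-α) / ((m:ℝ) - (n:ℝ))^2 :=
            div_le_div₀ (by positivity) (by linarith) hBpos le_rfl
        _ = 16 * M ^ (-α) * (1/((m:ℝ)-(n:ℝ))^2) := by ring
        _ ≤ 16 * M ^ (-α) * (1/((m:ℝ)-(n:ℝ))^2 + 1/(n:ℝ)^2) := by
            apply mul_le_mul_of_nonneg_left _ (by positivity)
            have : (0:ℝ) < 1/(n:ℝ)^2 := by positivity
            linarith
    · -- |n| < M/2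
      have hNM : |(n:ℝ)| ≤ M := by linarith
      have hMB : M^2/4 ≤ ((m:ℝ) - (n:ℝ))^2 := by
        have habs : |(m:ℝ)| - |(n:ℝ)| ≤ |(m:ℝ) - (n:ℝ)| := abs_sub_abs_le_abs_sub _ _
        rw [← hMdef] at habs
        nlinarith [abs_nonneg ((m:ℝ) - (n:ℝ)), sq_abs ((m:ℝ) - (n:ℝ)), abs_nonneg (n:ℝ)]
      have h2' : |(n:ℝ)| ^ (2 - α) = |(n:ℝ)| ^ (-α) * (n:ℝ)^2 := by
        rw [show (2 - α) = -α + 2 by ring, Real.rpow_add hNpos, rpow_two_eq, sq_abs]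
      have hA2 : |(n:ℝ)| ^ (-α) ≤ M ^ (2 - α) / (n:ℝ)^2 := by
        rw [le_div_iff₀ hn2pos, ← h2']
        exact Real.rpow_le_rpow hNpos.le hNM (by linarith)
      have hMeq : M ^ (2 - α) = M ^ (-α) * M^2 := by
        rw [show (2 - α) = -α + 2 by ring, Real.rpow_add hMpos, rpow_two_eq]
      have hM24 : (0:ℝ) < M^2/4 := by nlinarith
      have hcnn : (0:ℝ) ≤ 4 * (M ^ (2 - α) / (n:ℝ)^2) :=
        mul_nonneg (by norm_num) (div_nonneg (Real.rpow_nonneg hMpos.le _) hn2pos.le)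
      have hac : 4 * |(n:ℝ)| ^ (-α) ≤ 4 * (M ^ (2 - α) / (n:ℝ)^2) := by linarith
      calc |(n:ℝ)| ^ (-α) / ((x - (n:ℝ))^2 + |(n:ℝ)| ^ (-(2*α)))
          ≤ 4 * |(n:ℝ)| ^ (-α) / ((m:ℝ) - (n:ℝ))^2 := step1
        _ ≤ 4 * (M ^ (2 - α) / (n:ℝ)^2) / (M^2/4) := div_le_div₀ hcnn hac hM24 hMB
        _ = 16 * M ^ (-α) * (1/(n:ℝ)^2) := by
            rw [hMeq]
            have hM0 : M ≠ 0 := hMpos.ne'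
            have hn0 : (n:ℝ)^2 ≠ 0 := hn2pos.ne'
            field_simp
            ring
        _ ≤ 16 * M ^ (-α) * (1/((m:ℝ)-(n:ℝ))^2 + 1/(n:ℝ)^2) := by
            apply mul_le_mul_of_nonneg_left _ (by positivity)
            have : (0:ℝ) < 1/((m:ℝ)-(n:ℝ))^2 := by positivity
            linarith

private lemma F_nonneg (α x : ℝ) (n : ℤ) :
    0 ≤ (if n ≠ 0 then |(n:ℝ)| ^ (-α) / ((x - (n:ℝ)) ^ 2 + |(n:ℝ)| ^ (-(2 * α))) else 0) := by
  split_ifs with h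
  · positivity
  · exact le_refl 0

private lemma hT_summable : Summable (fun n : ℤ => 1/(n:ℝ)^2) :=
  Real.summable_one_div_int_pow.2 one_lt_two

private lemma hT2_summable (m : ℤ) : Summable (fun n : ℤ => 1/((m:ℝ)-(n:ℝ))^2) := by
  have h := hT_summable.comp_injective (Equiv.subLeft m).injective
  have : (fun n : ℤ => 1/(n:ℝ)^2) ∘ (Equiv.subLeft m) = fun n : ℤ => 1/((m:ℝ)-(n:ℝ))^2 := by
    funext n
    simp [Equiv.subLeft, Function.comp]
  rwa [this] at h

private lemma tsum_shift (m : ℤ) :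
    ∑' n : ℤ, 1/((m:ℝ)-(n:ℝ))^2 = ∑' n : ℤ, 1/(n:ℝ)^2 := by
  rw [← (Equiv.subLeft m).tsum_eq (fun n : ℤ => 1/(n:ℝ)^2)]
  apply tsum_congr
  intro n
  simp [Equiv.subLeft]

private lemma summable_aux {α x : ℝ} (hα0 : 0 ≤ α) (hα2 : α ≤ 2) {m : ℤ}
    (hx : |x - (m:ℝ)| ≤ 1/2) :
    Summable (fun n : ℤ => if n ≠ 0 then
      |(n:ℝ)| ^ (-α) / ((x - (n:ℝ)) ^ 2 + |(n:ℝ)| ^ (-(2 * α))) else 0) := by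
  have hBnn : (0:ℝ) ≤ (if m = 0 then 1 else |(m:ℝ)| ^ (-α)) := by
    split_ifs
    · norm_num
    · exact Real.rpow_nonneg (abs_nonneg _) _
  have hg : Summable (fun n : ℤ =>
      16 * (if m = 0 then 1 else |(m:ℝ)| ^ (-α)) * (1/((m:ℝ)-(n:ℝ))^2 + 1/(n:ℝ)^2)) :=
    ((hT2_summable m).add hT_summable).mul_left _
  rw [← Set.Finite.summable_compl_iff (Set.toFinite ({0, m} : Set ℤ))]
  refine Summable.of_nonneg_of_le (fun i => F_nonneg α x i.1) ?_ (hg.subtype _)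
  rintro ⟨i, hi⟩
  simp only [Set.mem_compl_iff, Set.mem_insert_iff, Set.mem_singleton_iff, not_or] at hi
  obtain ⟨hi0, him⟩ := hi
  show (if i ≠ 0 then |(i:ℝ)| ^ (-α) / ((x - (i:ℝ)) ^ 2 + |(i:ℝ)| ^ (-(2 * α))) else 0) ≤ _
  rw [if_pos hi0]
  exact term_bound hα0 hα2 hx hi0 him


/-- The integer closest to `x`, taking the smaller one when `x` is a half-integer. -/
noncomputable def nearestInt (x : ℝ) : ℤ := ⌈x - 1 / 2⌉


set_option maxHeartbeats 1000000 in
theorem stmt_14 (α : ℝ) (hα : α ∈ Set.Icc (0:ℝ) 2)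
    (S : ℝ → ℝ)
    (hS : ∀ x, S x = 1 / (x ^ 2 + 1) +
      ∑' n : ℤ, if n ≠ 0 then
        |(n : ℝ)| ^ (-α) / ((x - (n : ℝ)) ^ 2 + |(n : ℝ)| ^ (-(2 * α))) else 0)
    (μ : ℝ → ℝ)
    (hμ : ∀ x, μ x = if -(1/2:ℝ) < x ∧ x ≤ 1/2 then 1 / (x ^ 2 + 1)
      else |(nearestInt x : ℝ)| ^ (-α) /
        ((x - (nearestInt x : ℝ)) ^ 2 + |(nearestInt x : ℝ)| ^ (-(2 * α)))) :
    (∀ x : ℝ, Summable (fun n : ℤ => if n ≠ 0 then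
        |(n : ℝ)| ^ (-α) / ((x - (n : ℝ)) ^ 2 + |(n : ℝ)| ^ (-(2 * α))) else 0)) ∧
    ∃ c C : ℝ, 0 < c ∧ c ≤ C ∧ ∀ x : ℝ, c * μ x ≤ S x ∧ S x ≤ C * μ x := by
  obtain ⟨hα0, hα2⟩ := hα
  have hnear : ∀ x : ℝ, |x - (nearestInt x : ℝ)| ≤ 1/2 := by
    intro x
    have h1 : x - 1/2 ≤ ((⌈x - 1/2⌉ : ℤ):ℝ) := Int.le_ceil _
    have h2 : ((⌈x - 1/2⌉ : ℤ):ℝ) < x - 1/2 + 1 := Int.ceil_lt_add_one _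
    unfold nearestInt
    rw [show (1:ℝ)/2 = 1/2 by norm_num, abs_le]
    norm_num at h1 h2 ⊢
    constructor <;> linarith
  have hsum : ∀ x : ℝ, Summable (fun n : ℤ => if n ≠ 0 then
      |(n : ℝ)| ^ (-α) / ((x - (n : ℝ)) ^ 2 + |(n : ℝ)| ^ (-(2 * α))) else 0) :=
    fun x => summable_aux hα0 hα2 (hnear x)
  set T : ℝ := ∑' n : ℤ, 1/(n:ℝ)^2 with hTdef
  have hT0 : 0 ≤ T := tsum_nonneg (fun n => by positivity)
  refine ⟨hsum, 1, 6 + 40 * T, one_pos, by linarith, ?_⟩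
  intro x
  set m : ℤ := nearestInt x with hmdef
  have hx : |x - (m:ℝ)| ≤ 1/2 := hnear x
  have hcond : (-(1/2:ℝ) < x ∧ x ≤ 1/2) ↔ m = 0 := by
    rw [hmdef]
    unfold nearestInt
    rw [Int.ceil_eq_zero_iff]
    simp only [Set.mem_Ioc]
    constructor <;> intro h <;> constructor <;> linarith [h.1, h.2]
  -- abbreviations
  set F : ℤ → ℝ := fun n : ℤ => if n ≠ 0 then
      |(n : ℝ)| ^ (-α) / ((x - (n : ℝ)) ^ 2 + |(n : ℝ)| ^ (-(2 * α))) else 0 with hFdef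
  have hsx : Summable F := hsum x
  have hFnn : ∀ n, 0 ≤ F n := fun n => F_nonneg α x n
  set B : ℝ := if m = 0 then 1 else |(m:ℝ)| ^ (-α) with hBdef
  have hBnn : 0 ≤ B := by
    rw [hBdef]; split_ifs
    · norm_num
    · exact Real.rpow_nonneg (abs_nonneg _) _
  set g : ℤ → ℝ := fun n : ℤ => 16 * B * (1/((m:ℝ)-(n:ℝ))^2 + 1/(n:ℝ)^2) with hgdef
  have hgnn : ∀ n, 0 ≤ g n := by
    intro n
    apply mul_nonneg (by positivity)
    positivity
  have hgsum : Summable g := ((hT2_summable m).add hT_summable).mul_left _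
  have hite_le : ∀ n : ℤ, (if n = m then 0 else F n) ≤ g n := by
    intro n
    split_ifs with h
    · exact hgnn n
    · rcases eq_or_ne n 0 with rfl | hn0
      · simpa [hFdef] using hgnn 0
      · rw [hFdef]
        simp only [if_pos hn0]
        exact term_bound hα0 hα2 hx hn0 h
  have hitenn : ∀ n : ℤ, 0 ≤ (if n = m then 0 else F n) := by
    intro n; split_ifs
    · exact le_refl 0
    · exact hFnn n
  have hitesum : Summable (fun n : ℤ => if n = m then 0 else F n) :=
    Summable.of_nonneg_of_le hitenn hite_le hgsum
  have hsplit : ∑' n, F n = F m + ∑' n, (if n = m then 0 else F n) :=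
    Summable.tsum_eq_add_tsum_ite hsx m
  have hite_tsum : ∑' n, (if n = m then 0 else F n) ≤ 32 * B * T := by
    calc ∑' n, (if n = m then 0 else F n) ≤ ∑' n, g n := Summable.tsum_le_tsum hite_le hitesum hgsum
      _ = 16 * B * (∑' n : ℤ, (1/((m:ℝ)-(n:ℝ))^2 + 1/(n:ℝ)^2)) := tsum_mul_left
      _ = 16 * B * ((∑' n : ℤ, 1/((m:ℝ)-(n:ℝ))^2) + ∑' n : ℤ, 1/(n:ℝ)^2) := by
          rw [Summable.tsum_add (hT2_summable m) hT_summable]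
      _ = 32 * B * T := by rw [tsum_shift m, ← hTdef]; ring
  have hitepos : 0 ≤ ∑' n, (if n = m then 0 else F n) := tsum_nonneg hitenn
  rw [hS, hμ]
  rcases eq_or_ne m 0 with h0 | h0
  · -- central interval
    have hxr : -(1/2:ℝ) < x ∧ x ≤ 1/2 := hcond.2 h0
    rw [if_pos hxr]
    have hx2 : x^2 ≤ 1/4 := by nlinarith [hxr.1, hxr.2]
    have hx2pos : (0:ℝ) < x^2 + 1 := by positivity
    have hμ45 : 4/5 ≤ 1 / (x^2+1) := by
      rw [le_div_iff₀ hx2pos]; nlinarith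
    have hμ1 : 1 / (x^2+1) ≤ 1 := by
      rw [div_le_one hx2pos]; nlinarith
    have hF0 : F m = 0 := by rw [hFdef, h0]; simp
    have hB1 : B = 1 := by rw [hBdef, if_pos h0]
    constructor
    · have h : 0 ≤ ∑' n, F n := tsum_nonneg hFnn
      linarith
    · rw [hsplit, hF0]
      have hbnd : ∑' n, (if n = m then 0 else F n) ≤ 32 * T := by
        rw [hB1] at hite_tsum; linarith
      have hC : (6 + 40*T) * (4/5) ≤ (6 + 40*T) * (1/(x^2+1)) :=
        mul_le_mul_of_nonneg_left hμ45 (by linarith)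
      nlinarith
  · -- outer intervals
    have hxr : ¬(-(1/2:ℝ) < x ∧ x ≤ 1/2) := fun h => h0 (hcond.1 h)
    rw [if_neg hxr]
    have hFm : F m = |(m:ℝ)| ^ (-α) / ((x - (m:ℝ)) ^ 2 + |(m:ℝ)| ^ (-(2 * α))) := by
      rw [hFdef]; simp only [if_pos h0]
    have hM : (1:ℝ) ≤ |(m:ℝ)| := one_le_abs_cast h0
    have hMpos : (0:ℝ) < |(m:ℝ)| := by linarith
    have hMna : (0:ℝ) < |(m:ℝ)| ^ (-α) := Real.rpow_pos_of_pos hMpos _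
    have hM2na_pos : (0:ℝ) < |(m:ℝ)| ^ (-(2*α)) := Real.rpow_pos_of_pos hMpos _
    have hM2na_le : |(m:ℝ)| ^ (-(2*α)) ≤ 1 :=
      Real.rpow_le_one_of_one_le_of_nonpos hM (by linarith)
    have hxm2 : (x - (m:ℝ))^2 ≤ 1/4 := by
      have := abs_le.1 hx
      nlinarith [this.1, this.2]
    have hDpos : (0:ℝ) < (x - (m:ℝ))^2 + |(m:ℝ)| ^ (-(2*α)) := by positivity
    have hD54 : (x - (m:ℝ))^2 + |(m:ℝ)| ^ (-(2*α)) ≤ 5/4 := by linarith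
    set μx : ℝ := |(m:ℝ)| ^ (-α) / ((x - (m:ℝ)) ^ 2 + |(m:ℝ)| ^ (-(2 * α))) with hμxdef
    have hμnn : 0 ≤ μx := by positivity
    have hμlow : (4/5) * |(m:ℝ)| ^ (-α) ≤ μx := by
      have h1 : |(m:ℝ)| ^ (-α) / (5/4) ≤ μx := by
        rw [hμxdef]
        gcongr
      linarith
    have hBM : B = |(m:ℝ)| ^ (-α) := by rw [hBdef, if_neg h0]
    -- bound on 1/(x^2+1)
    have hxsq : (m:ℝ)^2/4 ≤ x^2 := by
      have h := sq_quarter (m := m) (n := 0) (by exact_mod_cast (Ne.symm h0) : (0:ℤ) ≠ m) hx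
      simpa using h
    have hm2 : (1:ℝ) ≤ (m:ℝ)^2 := by nlinarith [sq_abs (m:ℝ)]
    have h1x : 1/(x^2+1) ≤ 4 * |(m:ℝ)| ^ (-α) := by
      have hA : 1/(x^2+1) ≤ 4/(m:ℝ)^2 := by
        rw [div_le_div_iff₀ (by positivity) (by linarith)]
        nlinarith
      have hB2 : (4:ℝ)/(m:ℝ)^2 ≤ 4 * |(m:ℝ)| ^ (-α) := by
        have hr : |(m:ℝ)| ^ (-(2:ℝ)) ≤ |(m:ℝ)| ^ (-α) :=
          Real.rpow_le_rpow_of_exponent_le hM (by linarith)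
        have he : |(m:ℝ)| ^ (-(2:ℝ)) = 1/(m:ℝ)^2 := by
          rw [Real.rpow_neg hMpos.le, rpow_two_eq, sq_abs, one_div]
        rw [he] at hr
        have h4 := mul_le_mul_of_nonneg_left hr (by norm_num : (0:ℝ) ≤ 4)
        calc (4:ℝ)/(m:ℝ)^2 = 4 * (1/(m:ℝ)^2) := by ring
          _ ≤ 4 * |(m:ℝ)| ^ (-α) := h4
      linarith [hA, hB2]
    constructor
    · -- lower bound
      have h1 : 0 ≤ 1/(x^2+1) := by positivity
      rw [hsplit, hFm]
      linarith
    · -- upper bound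
      rw [hsplit, hFm]
      rw [hBM] at hite_tsum
      have hMle : |(m:ℝ)| ^ (-α) ≤ (5/4) * μx := by linarith
      have hmul := mul_le_mul_of_nonneg_left hMle
        (by linarith : (0:ℝ) ≤ 4 + 32 * T)
      nlinarith [hmul]
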